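/- Let α > 1 and x_min > 0, and let X_1, X_2, … be i.i.d. random variables distributed according to the power-law distribution with exponent α and threshold x_min. Then the maximum likelihood estimator α̂_n = 1 + n·(Σ_{i=1}^n ln(X_i/x_min))^(−1) converges to α almost surely as n → ∞. -/

import Mathlib

open MeasureTheory ProbabilityTheory Real Filter Finset

/-- The power-law probability measure with exponent `α` and threshold `xmin`:
the measure on `[xmin, ∞)` with density `((α−1)/xmin) · (x/xmin)^(−α)`. -/
noncomputable def powerLawMeasure (α xmin : ℝ) : Measure ℝ :=
  volume.withDensity fun x =>
    ENNReal.ofReal (if xmin ≤ x then ((α - 1) / xmin) * (x / xmin) ^ (-α) else 0)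

/-- The maximum likelihood estimator `α̂_n = 1 + n · (Σ_{i=1}^n ln(X_i/xmin))⁻¹`. -/
noncomputable def mleExponent {Ω : Type*} (X : ℕ → Ω → ℝ) (xmin : ℝ) (n : ℕ) (ω : Ω) : ℝ :=
  1 + n / (∑ i ∈ Finset.range n, Real.log (X i ω / xmin))

open Set

section Aux

variable {α xmin : ℝ}

private lemma powerLaw_deriv (hα : 1 < α) (hxmin : 0 < xmin) {x : ℝ} (hx : xmin ≤ x) :
    HasDerivAt (fun x => -((x/xmin)^(1-α) * (Real.log (x/xmin) + (α-1)⁻¹)))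
      (Real.log (x/xmin) * (((α-1)/xmin) * (x/xmin)^(-α))) x := by
  have hx0 : 0 < x := hxmin.trans_le hx
  have hu : 0 < x / xmin := div_pos hx0 hxmin
  have h1 : HasDerivAt (fun x : ℝ => x / xmin) (1 / xmin) x := by
    simpa using (hasDerivAt_id x).div_const xmin
  have h2 : HasDerivAt (fun x : ℝ => (x/xmin)^(1-α)) ((1-α) * (x/xmin)^(1-α-1) * (1/xmin)) x := by
    simpa [Function.comp_def, mul_comm, mul_assoc, mul_left_comm] using
      (Real.hasDerivAt_rpow_const (p := 1-α) (Or.inl hu.ne')).comp x h1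
  have h3 : HasDerivAt (fun x : ℝ => Real.log (x/xmin)) (1/xmin / (x/xmin)) x := h1.log hu.ne'
  have h4 := ((h2.mul (h3.add_const (α-1)⁻¹))).neg
  refine h4.congr_deriv ?_
  have e1 : (x/xmin)^(1-α-1) = (x/xmin)^(-α) := by norm_num
  have e2 : (x/xmin)^(1-α) = (x/xmin) * (x/xmin)^(-α) := by
    rw [show (1-α) = -α + 1 by ring, Real.rpow_add hu, Real.rpow_one, mul_comm]
  rw [e1, e2]
  have hα1 : α - 1 ≠ 0 := sub_ne_zero.mpr hα.ne'
  field_simp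
  ring

private lemma powerLaw_tendsto (hα : 1 < α) (hxmin : 0 < xmin) :
    Tendsto (fun x => -((x/xmin)^(1-α) * (Real.log (x/xmin) + (α-1)⁻¹))) atTop (nhds 0) := by
  have hpos : (0:ℝ) < α - 1 := sub_pos.mpr hα
  have hdiv : Tendsto (fun x : ℝ => x / xmin) atTop atTop :=
    tendsto_id.atTop_div_const hxmin
  have H1 : Tendsto (fun u : ℝ => u^(1-α) * Real.log u) atTop (nhds 0) := by
    have := (isLittleO_log_rpow_atTop hpos).tendsto_div_nhds_zero
    refine this.congr' ?_
    filter_upwards [eventually_gt_atTop (0:ℝ)] with u hu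
    rw [div_eq_mul_inv, mul_comm, ← Real.rpow_neg hu.le]
    norm_num
  have H2 : Tendsto (fun u : ℝ => u^(1-α) * (α-1)⁻¹) atTop (nhds 0) := by
    have := (tendsto_rpow_neg_atTop hpos).mul_const (α-1)⁻¹
    simpa [show -(α-1) = 1-α by ring] using this
  have H : Tendsto (fun u : ℝ => -(u^(1-α) * (Real.log u + (α-1)⁻¹))) atTop (nhds 0) := by
    have := ((H1.add H2).neg)
    simpa [mul_add] using this
  exact H.comp hdiv

private lemma powerLaw_density_nonneg (hα : 1 < α) (hxmin : 0 < xmin) (x : ℝ) :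
    0 ≤ (if xmin ≤ x then ((α - 1) / xmin) * (x / xmin) ^ (-α) else 0) := by
  split_ifs with h
  · exact mul_nonneg (div_nonneg (by linarith) hxmin.le)
      (Real.rpow_nonneg (div_nonneg (hxmin.le.trans h) hxmin.le) _)
  · exact le_refl 0

private lemma powerLaw_density_meas (hα : 1 < α) (hxmin : 0 < xmin) :
    Measurable fun x : ℝ => (if xmin ≤ x then ((α - 1) / xmin) * (x / xmin) ^ (-α) else 0) := by
  have heq : (fun x : ℝ => (if xmin ≤ x then ((α - 1) / xmin) * (x / xmin) ^ (-α) else 0))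
      = fun x : ℝ => (if xmin ≤ x then
          ((α - 1) / xmin) * Real.exp (Real.log (x / xmin) * (-α)) else 0) := by
    funext x
    split_ifs with h
    · rw [Real.rpow_def_of_pos (div_pos (hxmin.trans_le h) hxmin)]
    · rfl
  rw [heq]
  apply Measurable.ite measurableSet_Ici
  · exact ((Real.measurable_exp.comp ((Real.measurable_log.comp
      (measurable_id.div_const xmin)).mul_const (-α))).const_mul _)
  · exact measurable_const

private lemma powerLaw_integrand_nonneg (hα : 1 < α) (hxmin : 0 < xmin) {x : ℝ}
    (hx : x ∈ Ioi xmin) : 0 ≤ Real.log (x/xmin) * (((α-1)/xmin) * (x/xmin)^(-α)) := by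
  have hx0 : 0 < x := hxmin.trans hx
  have h1 : (1:ℝ) ≤ x / xmin := (one_le_div hxmin).mpr (le_of_lt hx)
  exact mul_nonneg (Real.log_nonneg h1)
    (mul_nonneg (div_nonneg (by linarith) hxmin.le) (Real.rpow_nonneg (by positivity) _))

private lemma powerLaw_log_integrableOn (hα : 1 < α) (hxmin : 0 < xmin) :
    IntegrableOn (fun x => Real.log (x/xmin) * (((α-1)/xmin) * (x/xmin)^(-α))) (Ioi xmin) :=
  integrableOn_Ioi_deriv_of_nonneg' (fun x hx => powerLaw_deriv hα hxmin hx)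
    (fun x hx => powerLaw_integrand_nonneg hα hxmin hx) (powerLaw_tendsto hα hxmin)

private lemma powerLaw_log_integral (hα : 1 < α) (hxmin : 0 < xmin) :
    ∫ x in Ioi xmin, Real.log (x/xmin) * (((α-1)/xmin) * (x/xmin)^(-α)) = (α-1)⁻¹ := by
  have := integral_Ioi_of_hasDerivAt_of_nonneg'
    (g := fun x => -((x/xmin)^(1-α) * (Real.log (x/xmin) + (α-1)⁻¹)))
    (fun x hx => powerLaw_deriv hα hxmin hx)
    (fun x hx => powerLaw_integrand_nonneg hα hxmin hx)
    (powerLaw_tendsto hα hxmin)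
  rw [this]
  simp only [zero_sub, neg_neg, div_self hxmin.ne', Real.one_rpow, Real.log_one, one_mul, zero_add]

end Aux

theorem stmt5 {Ω : Type*} [MeasurableSpace Ω] (μ : Measure Ω) [IsProbabilityMeasure μ]
    (α xmin : ℝ) (hα : 1 < α) (hxmin : 0 < xmin)
    (X : ℕ → Ω → ℝ) (hmeas : ∀ i, Measurable (X i))
    (hindep : iIndepFun X μ)
    (hdist : ∀ i, Measure.map (X i) μ = powerLawMeasure α xmin) :
    ∀ᵐ ω ∂μ, Tendsto (fun n : ℕ => mleExponent X xmin n ω) atTop (nhds α) := by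
  set d : ℝ → ℝ := fun x => (if xmin ≤ x then ((α - 1) / xmin) * (x / xmin) ^ (-α) else 0) with hd
  set g : ℝ → ℝ := fun x => Real.log (x / xmin) with hg
  have hgmeas : Measurable g := Real.measurable_log.comp (measurable_id.div_const xmin)
  have hdmeas : Measurable d := powerLaw_density_meas hα hxmin
  have hdnn : ∀ x, 0 ≤ d x := powerLaw_density_nonneg hα hxmin
  have hIoi : IntegrableOn (fun x => g x * d x) (Ioi xmin) := by
    apply (powerLaw_log_integrableOn hα hxmin).congr_fun ?_ measurableSet_Ioi
    intro x hx
    simp only [hg, hd, if_pos (le_of_lt (Set.mem_Ioi.mp hx))]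
  have hIic : IntegrableOn (fun x => g x * d x) (Iic xmin) := by
    apply (integrableOn_zero (s := Iic xmin)).congr_fun ?_ measurableSet_Iic
    intro x hx
    rcases lt_or_eq_of_le (mem_Iic.mp hx) with h | h
    · simp [hg, hd, not_le.mpr h]
    · simp [hg, hd, h, div_self hxmin.ne']
  have hint : Integrable (fun x => g x * d x) := by
    rw [← integrableOn_univ, ← Iic_union_Ioi (a := xmin)]
    exact hIic.union hIoi
  have hI : ∫ x, g x * d x = (α-1)⁻¹ := by
    rw [← intervalIntegral.integral_Iic_add_Ioi hIic hIoi]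
    have h1 : ∫ x in Iic xmin, g x * d x = 0 := by
      rw [setIntegral_congr_fun measurableSet_Iic (g := fun _ => (0:ℝ))]
      · simp
      · intro x hx
        rcases lt_or_eq_of_le (mem_Iic.mp hx) with h | h
        · simp [hg, hd, not_le.mpr h]
        · simp [hg, hd, h, div_self hxmin.ne']
    have h2 : ∫ x in Ioi xmin, g x * d x = (α-1)⁻¹ := by
      rw [setIntegral_congr_fun measurableSet_Ioi
        (g := fun x => Real.log (x/xmin) * (((α-1)/xmin) * (x/xmin)^(-α)))]
      · exact powerLaw_log_integral hα hxmin
      · intro x hx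
        simp only [hg, hd, if_pos (le_of_lt (Set.mem_Ioi.mp hx))]
    rw [h1, h2, zero_add]
  have hplm : powerLawMeasure α xmin = volume.withDensity fun x => ((d x).toNNReal : ENNReal) :=
    rfl
  have hgint : Integrable g (powerLawMeasure α xmin) := by
    rw [powerLawMeasure, integrable_withDensity_iff hdmeas.ennreal_ofReal
      (Eventually.of_forall fun x => ENNReal.ofReal_lt_top)]
    apply hint.congr
    filter_upwards with x
    rw [ENNReal.toReal_ofReal (hdnn x)]
  have hgI : ∫ x, g x ∂(powerLawMeasure α xmin) = (α-1)⁻¹ := by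
    rw [hplm, integral_withDensity_eq_integral_smul (f := fun x => (d x).toNNReal)
      (measurable_real_toNNReal.comp hdmeas) g, ← hI]
    congr 1
    funext x
    rw [NNReal.smul_def, smul_eq_mul, Real.coe_toNNReal _ (hdnn x), mul_comm]
  set Y : ℕ → Ω → ℝ := fun i ω => g (X i ω) with hY
  have hYint : Integrable (Y 0) μ := by
    have hgint' : Integrable g (Measure.map (X 0) μ) := by rw [hdist 0]; exact hgint
    exact (integrable_map_measure hgmeas.aestronglyMeasurable (hmeas 0).aemeasurable).mp hgint'
  have hYindep : Pairwise (Function.onFun (IndepFun · · μ) Y) :=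
    fun i j hij => (hindep.indepFun hij).comp hgmeas hgmeas
  have hYident : ∀ i, IdentDistrib (Y i) (Y 0) μ μ := fun i =>
    IdentDistrib.comp ⟨(hmeas i).aemeasurable, (hmeas 0).aemeasurable,
      by rw [hdist i, hdist 0]⟩ hgmeas
  have hYexp : μ[Y 0] = (α-1)⁻¹ := by
    have : μ[Y 0] = ∫ x, g x ∂(Measure.map (X 0) μ) :=
      (integral_map (hmeas 0).aemeasurable hgmeas.aestronglyMeasurable).symm
    rw [this, hdist 0, hgI]
  have hSLLN := strong_law_ae_real Y hYint hYindep hYident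
  rw [hYexp] at hSLLN
  filter_upwards [hSLLN] with ω hω
  have hm : (α-1)⁻¹ ≠ 0 := inv_ne_zero (sub_ne_zero.mpr hα.ne')
  have h2 := hω.inv₀ hm
  rw [inv_inv] at h2
  have h3 : Tendsto (fun n : ℕ => 1 + ((∑ i ∈ range n, Y i ω) / n)⁻¹) atTop (nhds (1 + (α-1))) :=
    h2.const_add 1
  rw [show (1 : ℝ) + (α - 1) = α by ring] at h3
  apply h3.congr
  intro n
  rw [mleExponent, inv_div]
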